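/- If M is a dominating induced matching of a finite simple graph G, then M contains at least one edge of every odd cycle of G. -/

import Mathlib

/-- `M` is an induced matching of `G` that dominates every edge:
edges of `M` are edges of `G`, pairwise at distance at least two,
and every edge of `G` shares an endpoint with some edge of `M`. -/
def IsDIM {V : Type*} (G : SimpleGraph V) (M : Set (Sym2 V)) : Prop :=
  M ⊆ G.edgeSet ∧
  (∀ e ∈ M, ∀ f ∈ M, e ≠ f → ∀ u ∈ e, ∀ v ∈ f, u ≠ v ∧ ¬ G.Adj u v) ∧
  (∀ e ∈ G.edgeSet, ∃ f ∈ M, ∃ u, u ∈ e ∧ u ∈ f)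

lemma getVert_edge_mem {V : Type*} {G : SimpleGraph V} {u v : V} (p : G.Walk u v) :
    ∀ i < p.length, s(p.getVert i, p.getVert (i + 1)) ∈ p.edges := by
  induction p with
  | nil => simp
  | cons h q ih =>
    intro i hi
    cases i with
    | zero => simp [SimpleGraph.Walk.getVert_cons_succ]
    | succ n =>
      simp only [SimpleGraph.Walk.getVert_cons_succ, SimpleGraph.Walk.edges_cons,
        List.mem_cons]
      exact Or.inr (ih n (by simpa using hi))

/-- A dominating induced matching contains at least one edge of every odd cycle. -/
theorem dim_meets_odd_cycle {V : Type*} [Fintype V] (G : SimpleGraph V)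
    (M : Set (Sym2 V)) (hM : IsDIM G M) {v : V} (c : G.Walk v v)
    (hc : c.IsCycle) (hodd : Odd c.length) :
    ∃ e ∈ M, e ∈ c.edges := by
  by_contra hno
  push_neg at hno
  set cov : V → Prop := fun x => ∃ f ∈ M, x ∈ f with hcov
  -- alternation: for each edge of the cycle, exactly one endpoint is covered
  have halt : ∀ i < c.length, (cov (c.getVert (i + 1)) ↔ ¬ cov (c.getVert i)) := by
    intro i hi
    have hadj := c.adj_getVert_succ hi
    have hne : c.getVert i ≠ c.getVert (i + 1) := hadj.ne
    have hedge : s(c.getVert i, c.getVert (i + 1)) ∈ G.edgeSet := hadj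
    have hmem := getVert_edge_mem c i hi
    have hnotM : s(c.getVert i, c.getVert (i + 1)) ∉ M := fun hm => hno _ hm hmem
    constructor
    · rintro ⟨f, hf, hbf⟩ ⟨e, he, hae⟩
      by_cases hef : e = f
      · subst hef
        exact hnotM ((Sym2.mem_and_mem_iff hne).mp ⟨hae, hbf⟩ ▸ he)
      · exact (hM.2.1 e he f hf hef _ hae _ hbf).2 hadj
    · intro hna
      obtain ⟨f, hf, w, hw1, hw2⟩ := hM.2.2 _ hedge
      rcases Sym2.mem_iff.mp hw1 with rfl | rfl
      · exact absurd ⟨f, hf, hw2⟩ hna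
      · exact ⟨f, hf, hw2⟩
  have key : ∀ i ≤ c.length, (cov (c.getVert i) ↔ (cov v ↔ Even i)) := by
    intro i
    induction i with
    | zero => simp
    | succ n ih =>
      intro hle
      have hn : n < c.length := hle
      have := halt n hn
      have h2 := ih hn.le
      rw [this, h2, Nat.even_add_one]
      by_cases hp : cov v <;> by_cases hq : Even n <;> simp [hp, hq]
  have := key c.length le_rfl
  rw [c.getVert_length] at this
  rw [← Nat.not_even_iff_odd] at hodd
  by_cases hp : cov v <;> simp [hp, hodd] at this
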